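/- arXiv:math/0605181 — 3 statements merged into one kernel-verified Lean document; each statement's English description precedes it below -/
import Mathlib

section
/- For any concave Young-function Φ with density function φ, there exist constants C_Φ > 0 and B_Φ ≥ 0 such that A_Φ(∞) − B_Φ ≤ ∫₀^∞ Φ(t)/(t+1)² dt ≤ C_Φ + A_Φ(∞), where A_Φ(∞) := ∫₁^∞ φ(t)/t dt. -/
open MeasureTheory Set Filter Topology
open scoped ENNReal

def IsCYFPair (Φ φ : ℝ → ℝ) : Prop :=
  (∀ t ∈ Set.Ioi (0:ℝ), 0 < φ t) ∧
  (∀ s ∈ Set.Ioi (0:ℝ), ∀ t ∈ Set.Ioi (0:ℝ), s ≤ t → φ t ≤ φ s) ∧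
  (∀ t ∈ Set.Ioi (0:ℝ), ContinuousWithinAt φ (Set.Ici t) t) ∧
  (∀ x ∈ Set.Ioi (0:ℝ), IntegrableOn φ (Set.Ioc 0 x)) ∧
  (∀ x ∈ Set.Ici (0:ℝ), Φ x = ∫ t in Set.Ioc 0 x, φ t) ∧
  Filter.Tendsto Φ Filter.atTop Filter.atTop

def YConc : Set (ℝ → ℝ) := {Φ | ∃ φ, IsCYFPair Φ φ}

def Aset : Set (ℝ → ℝ) :=
  {Φ | ∃ φ, IsCYFPair Φ φ ∧ MeasureTheory.IntegrableOn (fun t => φ t / t) (Set.Ioi 1)}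

noncomputable def dY (Φ Ψ : ℝ → ℝ) : ℝ :=
  Real.sqrt (∫ x in Set.Ioi (0:ℝ), (Φ x - Ψ x)^2 / (x+1)^4)

def Yb (b : ℝ) : Set (ℝ → ℝ) := {Φ | Φ ∈ YConc ∧ Φ b = b}
def AbS (b : ℝ) : Set (ℝ → ℝ) := {Φ | Φ ∈ Aset ∧ Φ b = b}

lemma aux_int (a : ℝ) (ha : 0 < a) :
    IntegrableOn (fun t : ℝ => 1/t^2) (Set.Ioi a) ∧ (∫ t in Set.Ioi a, 1/t^2) = 1/a := by
  have hderiv : ∀ x ∈ Set.Ici a, HasDerivAt (fun y : ℝ => -y⁻¹) (1/x^2) x := by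
    intro x hx
    have hx0 : x ≠ 0 := (lt_of_lt_of_le ha hx).ne'
    have h := ((hasDerivAt_id x).inv hx0).neg
    rw [show (1/x^2 : ℝ) = -(-1 / id x ^ 2) by simp [neg_div]]
    exact h
  have hpos : ∀ x ∈ Set.Ioi a, 0 ≤ 1/x^2 := fun x _ => by positivity
  have htend : Tendsto (fun y : ℝ => -y⁻¹) atTop (𝓝 0) := by
    simpa using (tendsto_inv_atTop_zero : Tendsto (fun y:ℝ => y⁻¹) atTop (𝓝 0)).neg
  refine ⟨integrableOn_Ioi_deriv_of_nonneg' hderiv hpos htend, ?_⟩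
  rw [integral_Ioi_of_hasDerivAt_of_nonneg' hderiv hpos htend]
  simp [one_div]

lemma aux_int_shift (a : ℝ) (ha : 0 ≤ a) :
    IntegrableOn (fun t : ℝ => 1/(t+1)^2) (Set.Ioi a) ∧
      (∫ t in Set.Ioi a, 1/(t+1)^2) = 1/(a+1) := by
  have hderiv : ∀ x ∈ Set.Ici a, HasDerivAt (fun y : ℝ => -(y+1)⁻¹) (1/(x+1)^2) x := by
    intro x hx
    have hx0 : x + 1 ≠ 0 := ne_of_gt (by have := Set.mem_Ici.1 hx; linarith)
    have h := (((hasDerivAt_id x).add_const 1).inv hx0).neg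
    rw [show (1/(x+1)^2 : ℝ) = -(-1 / (id x + 1) ^ 2) by simp [neg_div]]
    exact h
  have hpos : ∀ x ∈ Set.Ioi a, 0 ≤ 1/(x+1)^2 := fun x _ => by positivity
  have htend : Tendsto (fun y : ℝ => -(y+1)⁻¹) atTop (𝓝 0) := by
    have : Tendsto (fun y : ℝ => (y+1)⁻¹) atTop (𝓝 0) :=
      (tendsto_inv_atTop_zero : Tendsto (fun y:ℝ => y⁻¹) atTop (𝓝 0)).comp
        (tendsto_atTop_add_const_right _ 1 tendsto_id)
    simpa using this.neg
  refine ⟨integrableOn_Ioi_deriv_of_nonneg' hderiv hpos htend, ?_⟩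
  rw [integral_Ioi_of_hasDerivAt_of_nonneg' hderiv hpos htend]
  simp [one_div]

theorem stmt_1 (Φ φ : ℝ → ℝ) (h : IsCYFPair Φ φ) :
    ∃ C B : ℝ, 0 < C ∧ 0 ≤ B ∧
      (∫⁻ t in Set.Ioi (1:ℝ), ENNReal.ofReal (φ t / t)) - ENNReal.ofReal B ≤
        ∫⁻ t in Set.Ioi (0:ℝ), ENNReal.ofReal (Φ t / (t+1)^2) ∧
      (∫⁻ t in Set.Ioi (0:ℝ), ENNReal.ofReal (Φ t / (t+1)^2)) ≤
        ENNReal.ofReal C + ∫⁻ t in Set.Ioi (1:ℝ), ENNReal.ofReal (φ t / t) := by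
  obtain ⟨hpos, hdec, -, hint, hΦ, -⟩ := h
  set μ := volume.restrict (Set.Ioi (0:ℝ)) with hμ
  have hφ1 : 0 < φ 1 := hpos 1 (Set.mem_Ioi.2 one_pos)
  have hφnn : ∀ s ∈ Set.Ioi (0:ℝ), 0 ≤ φ s := fun s hs => (hpos s hs).le
  set f : ℝ → ℝ≥0∞ := fun s => ENNReal.ofReal (φ s) with hf
  set g : ℝ → ℝ≥0∞ := fun t => ENNReal.ofReal (1/(t+1)^2) with hg
  have hφm : AEMeasurable φ μ :=
    aemeasurable_restrict_of_antitoneOn measurableSet_Ioi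
      (fun s hs t ht hst => hdec s hs t ht hst)
  have hfm : AEMeasurable f μ := ENNReal.measurable_ofReal.comp_aemeasurable hφm
  have hgm : Measurable g :=
    ENNReal.measurable_ofReal.comp
      (measurable_const.div (((measurable_id.add_const 1).pow_const 2)))
  have hΦnn : ∀ t ∈ Set.Ioi (0:ℝ), 0 ≤ Φ t := by
    intro t ht
    rw [hΦ t (Set.mem_Ici.2 (le_of_lt ht))]
    exact setIntegral_nonneg measurableSet_Ioc (fun s hs => (hpos s (Set.mem_Ioi.2 hs.1)).le)
  have hΦlint : ∀ t ∈ Set.Ioi (0:ℝ), ENNReal.ofReal (Φ t) = ∫⁻ s in Set.Ioc 0 t, f s := by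
    intro t ht
    rw [hΦ t (Set.mem_Ici.2 (le_of_lt ht))]
    exact ofReal_integral_eq_lintegral_ofReal (hint t ht)
      ((ae_restrict_iff' measurableSet_Ioc).2
        (Filter.Eventually.of_forall fun s hs => (hpos s (Set.mem_Ioi.2 hs.1)).le))
  have hgi : ∀ s : ℝ, 0 < s → (∫⁻ t in Set.Ioi s, g t) = ENNReal.ofReal (1/(s+1)) := by
    intro s hs
    rw [← (aux_int_shift s hs.le).2,
      ofReal_integral_eq_lintegral_ofReal (aux_int_shift s hs.le).1
        (Filter.Eventually.of_forall fun x => by positivity)]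
  -- main Tonelli identity
  have hIJ : (∫⁻ t in Set.Ioi (0:ℝ), ENNReal.ofReal (Φ t / (t+1)^2)) =
      ∫⁻ s in Set.Ioi (0:ℝ), f s * ENNReal.ofReal (1/(s+1)) := by
    set F : ℝ → ℝ → ℝ≥0∞ := fun t s =>
      ({p : ℝ × ℝ | p.2 ≤ p.1}.indicator 1 (t, s)) * (f s * g t) with hF
    have hSm : MeasurableSet {p : ℝ × ℝ | p.2 ≤ p.1} :=
      measurableSet_le measurable_snd measurable_fst
    have hFm : AEMeasurable (Function.uncurry F) (μ.prod μ) :=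
      ((measurable_one.indicator hSm).aemeasurable).mul (hfm.comp_snd.mul hgm.aemeasurable.comp_fst)
    have step1 : (∫⁻ t in Set.Ioi (0:ℝ), ENNReal.ofReal (Φ t / (t+1)^2)) =
        ∫⁻ t, (∫⁻ s, F t s ∂μ) ∂μ := by
      refine setLIntegral_congr_fun measurableSet_Ioi
        (fun t ht => ?_)
      have e1 : ∀ s : ℝ, F t s = (Set.Iic t).indicator (fun s => f s * g t) s := by
        intro s
        by_cases hst : s ≤ t <;>
          simp [hF, Set.indicator_apply, Set.mem_Iic, Set.mem_setOf_eq, hst]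
      have hfm2 : AEMeasurable f (volume.restrict (Set.Ioc 0 t)) :=
        hfm.mono_measure (Measure.restrict_mono Set.Ioc_subset_Ioi_self le_rfl)
      calc ENNReal.ofReal (Φ t / (t+1)^2)
          = ENNReal.ofReal (Φ t) * g t := by
            rw [div_eq_mul_one_div, ENNReal.ofReal_mul (hΦnn t ht)]
        _ = (∫⁻ s in Set.Ioc 0 t, f s) * g t := by rw [hΦlint t ht]
        _ = ∫⁻ s in Set.Ioc 0 t, f s * g t := (lintegral_mul_const'' _ hfm2).symm
        _ = ∫⁻ s in Set.Iic t, f s * g t ∂μ := by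
            have hset : Set.Iic t ∩ Set.Ioi 0 = Set.Ioc 0 t := by
              ext x
              simp only [Set.mem_inter_iff, Set.mem_Iic, Set.mem_Ioi, Set.mem_Ioc]
              exact and_comm
            rw [hμ, Measure.restrict_restrict measurableSet_Iic, hset]
        _ = ∫⁻ s, (Set.Iic t).indicator (fun s => f s * g t) s ∂μ :=
            (lintegral_indicator measurableSet_Iic _).symm
        _ = ∫⁻ s, F t s ∂μ := lintegral_congr fun s => (e1 s).symm
    have step3 : (∫⁻ s, (∫⁻ t, F t s ∂μ) ∂μ) =
        ∫⁻ s in Set.Ioi (0:ℝ), f s * ENNReal.ofReal (1/(s+1)) := by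
      refine setLIntegral_congr_fun measurableSet_Ioi
        (fun s hs => ?_)
      have e1 : ∀ t : ℝ, F t s = (Set.Ici s).indicator (fun t => f s * g t) t := by
        intro t
        by_cases hst : s ≤ t <;>
          simp [hF, Set.indicator_apply, Set.mem_Ici, Set.mem_setOf_eq, hst]
      calc (∫⁻ t, F t s ∂μ)
          = ∫⁻ t, (Set.Ici s).indicator (fun t => f s * g t) t ∂μ := lintegral_congr e1
        _ = ∫⁻ t in Set.Ici s, f s * g t ∂μ := lintegral_indicator measurableSet_Ici _
        _ = ∫⁻ t in Set.Ici s, f s * g t := by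
            have hset : Set.Ici s ∩ Set.Ioi 0 = Set.Ici s :=
              Set.inter_eq_left.2 (fun x hx => lt_of_lt_of_le (Set.mem_Ioi.1 hs) hx)
            rw [hμ, Measure.restrict_restrict measurableSet_Ici, hset]
        _ = ∫⁻ t in Set.Ioi s, f s * g t := by
            rw [← MeasureTheory.restrict_Ioi_eq_restrict_Ici]
        _ = f s * ∫⁻ t in Set.Ioi s, g t := lintegral_const_mul' _ _ ENNReal.ofReal_ne_top
        _ = f s * ENNReal.ofReal (1/(s+1)) := by rw [hgi s (Set.mem_Ioi.1 hs)]
    rw [step1, lintegral_lintegral_swap hFm, step3]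
  -- C = Φ 1 > 0
  have hC : 0 < Φ 1 := by
    rw [hΦ 1 (by norm_num)]
    have h1 : (∫ _ in Set.Ioc (0:ℝ) 1, φ 1) ≤ ∫ s in Set.Ioc (0:ℝ) 1, φ s :=
      setIntegral_mono_on (integrableOn_const (by simp) (by simp))
        (hint 1 (Set.mem_Ioi.2 one_pos)) measurableSet_Ioc (fun s hs => hdec s (Set.mem_Ioi.2 hs.1) 1 (Set.mem_Ioi.2 one_pos) hs.2)
    have h2 : (∫ _ in Set.Ioc (0:ℝ) 1, φ 1) = φ 1 := by simp
    linarith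
  -- split
  have hunion : (∫⁻ s in Set.Ioi (0:ℝ), f s * ENNReal.ofReal (1/(s+1))) =
      (∫⁻ s in Set.Ioc (0:ℝ) 1, f s * ENNReal.ofReal (1/(s+1))) +
      ∫⁻ s in Set.Ioi (1:ℝ), f s * ENNReal.ofReal (1/(s+1)) := by
    rw [← Set.Ioc_union_Ioi_eq_Ioi (zero_le_one (α := ℝ)),
      lintegral_union measurableSet_Ioi (Set.Ioc_disjoint_Ioi le_rfl)]
  have hpart1 : (∫⁻ s in Set.Ioc (0:ℝ) 1, f s * ENNReal.ofReal (1/(s+1))) ≤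
      ENNReal.ofReal (Φ 1) := by
    refine le_trans (lintegral_mono_ae ((ae_restrict_iff' measurableSet_Ioc).2
      (Filter.Eventually.of_forall fun s hs => ?_))) (le_of_eq (hΦlint 1 (Set.mem_Ioi.2 one_pos)).symm)
    calc f s * ENNReal.ofReal (1/(s+1)) ≤ f s * 1 := by
          gcongr
          exact ENNReal.ofReal_le_one.2
            (by rw [div_le_one (by linarith [hs.1])]; linarith [hs.1])
      _ = f s := mul_one _
  have hpart2 : (∫⁻ s in Set.Ioi (1:ℝ), f s * ENNReal.ofReal (1/(s+1))) ≤
      ∫⁻ t in Set.Ioi (1:ℝ), ENNReal.ofReal (φ t / t) := by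
    refine lintegral_mono_ae ((ae_restrict_iff' measurableSet_Ioi).2
      (Filter.Eventually.of_forall fun s hs => ?_))
    have hs1 : (1:ℝ) < s := Set.mem_Ioi.1 hs
    rw [hf, ← ENNReal.ofReal_mul (hφnn s (Set.mem_Ioi.2 (lt_trans one_pos hs1)))]
    apply ENNReal.ofReal_le_ofReal
    rw [div_eq_mul_one_div (φ s) s]
    have h0 : (0:ℝ) < s := lt_trans one_pos hs1
    exact mul_le_mul_of_nonneg_left
      (one_div_le_one_div_of_le h0 (by linarith)) (hφnn s (Set.mem_Ioi.2 h0))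
  -- second integral value
  have hsec : (∫⁻ s in Set.Ioi (1:ℝ), ENNReal.ofReal (φ 1 * (1/s^2))) =
      ENNReal.ofReal (φ 1) := by
    have hai := aux_int 1 one_pos
    calc ∫⁻ s in Set.Ioi (1:ℝ), ENNReal.ofReal (φ 1 * (1/s^2))
        = ∫⁻ s in Set.Ioi (1:ℝ), ENNReal.ofReal (φ 1) * ENNReal.ofReal (1/s^2) := by
          simp_rw [ENNReal.ofReal_mul hφ1.le]
      _ = ENNReal.ofReal (φ 1) * ∫⁻ s in Set.Ioi (1:ℝ), ENNReal.ofReal (1/s^2) :=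
          lintegral_const_mul' _ _ ENNReal.ofReal_ne_top
      _ = ENNReal.ofReal (φ 1) := by
          rw [← ofReal_integral_eq_lintegral_ofReal hai.1
            (Filter.Eventually.of_forall fun x => by positivity), hai.2]
          norm_num
  -- lower bound
  have hlow : (∫⁻ t in Set.Ioi (1:ℝ), ENNReal.ofReal (φ t / t)) ≤
      (∫⁻ t in Set.Ioi (0:ℝ), ENNReal.ofReal (Φ t / (t+1)^2)) + ENNReal.ofReal (φ 1) := by
    have key : ∀ s : ℝ, 1 < s → ENNReal.ofReal (φ s / s) ≤
        f s * ENNReal.ofReal (1/(s+1)) + ENNReal.ofReal (φ 1 * (1/s^2)) := by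
      intro s hs
      have h0 : (0:ℝ) < s := by linarith
      have hφs : φ s ≤ φ 1 := hdec 1 (Set.mem_Ioi.2 one_pos) s (Set.mem_Ioi.2 h0) hs.le
      have hr : φ s / s ≤ φ s * (1/(s+1)) + φ 1 * (1/s^2) := by
        have e : φ s / s - φ s * (1/(s+1)) = φ s / (s*(s+1)) := by
          field_simp
          ring
        have h2 : φ s / (s*(s+1)) ≤ φ 1 * (1/s^2) := by
          rw [mul_one_div]
          exact div_le_div₀ hφ1.le hφs (by positivity) (by nlinarith)
        linarith
      calc ENNReal.ofReal (φ s / s)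
          ≤ ENNReal.ofReal (φ s * (1/(s+1)) + φ 1 * (1/s^2)) :=
            ENNReal.ofReal_le_ofReal hr
        _ ≤ ENNReal.ofReal (φ s * (1/(s+1))) + ENNReal.ofReal (φ 1 * (1/s^2)) :=
            ENNReal.ofReal_add_le
        _ = f s * ENNReal.ofReal (1/(s+1)) + ENNReal.ofReal (φ 1 * (1/s^2)) := by
            rw [hf, ENNReal.ofReal_mul (hφnn s (Set.mem_Ioi.2 h0))]
    calc (∫⁻ t in Set.Ioi (1:ℝ), ENNReal.ofReal (φ t / t))
        ≤ ∫⁻ s in Set.Ioi (1:ℝ),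
            (f s * ENNReal.ofReal (1/(s+1)) + ENNReal.ofReal (φ 1 * (1/s^2))) :=
          lintegral_mono_ae ((ae_restrict_iff' measurableSet_Ioi).2
            (Filter.Eventually.of_forall fun s hs => key s (Set.mem_Ioi.1 hs)))
      _ = (∫⁻ s in Set.Ioi (1:ℝ), f s * ENNReal.ofReal (1/(s+1))) +
          ∫⁻ s in Set.Ioi (1:ℝ), ENNReal.ofReal (φ 1 * (1/s^2)) := by
          exact lintegral_add_right _ (ENNReal.measurable_ofReal.comp
            (measurable_const.mul (measurable_const.div (measurable_id.pow_const 2))))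
      _ ≤ (∫⁻ s in Set.Ioi (0:ℝ), f s * ENNReal.ofReal (1/(s+1))) + ENNReal.ofReal (φ 1) := by
          rw [hsec]
          gcongr
          exact zero_le_one
      _ = (∫⁻ t in Set.Ioi (0:ℝ), ENNReal.ofReal (Φ t / (t+1)^2)) + ENNReal.ofReal (φ 1) := by
          rw [hIJ]
  refine ⟨Φ 1, φ 1, hC, hφ1.le, tsub_le_iff_right.2 hlow, ?_⟩
  rw [hIJ, hunion]
  exact add_le_add hpart1 hpart2
end

section
/- For positive reals b, c, the following are equivalent: (1) b = c; (2) 𝒴_b = 𝒴_c; (3) dist(𝒴_b, 𝒴_c) = 0, where dist(ℱ,𝒢) = sup{ inf{ d(Φ,Ψ) : Ψ ∈ 𝒢 } : Φ ∈ ℱ } and d is the weighted L² semi-metric. -/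
open MeasureTheory Set Filter

noncomputable def distSet (F G : Set (ℝ → ℝ)) : ℝ :=
  sSup {r : ℝ | ∃ Φ ∈ F, r = sInf {s : ℝ | ∃ Ψ ∈ G, s = dY Φ Ψ}}

-- difference formula
-- difference formula
lemma diff_formula {Ψ ψ : ℝ → ℝ} (h : IsCYFPair Ψ ψ) {x y : ℝ} (hx : 0 ≤ x) (hxy : x ≤ y) :
    Ψ y = Ψ x + ∫ t in Set.Ioc x y, ψ t := by
  obtain ⟨hpos, hdec, hrc, hint, hval, htop⟩ := h
  rcases eq_or_lt_of_le (hx.trans hxy) with hy0 | hy0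
  · have hx0 : x = 0 := le_antisymm (hxy.trans hy0.symm.le) hx
    subst hx0; rw [← hy0]; simp
  · have hIy := hint y hy0
    rw [hval y (hx.trans hxy), hval x hx,
      ← Set.Ioc_union_Ioc_eq_Ioc hx hxy,
      setIntegral_union ((Set.Ioc_disjoint_Ioc_of_le le_rfl)) measurableSet_Ioc
        (hIy.mono_set (Set.Ioc_subset_Ioc_right hxy))
        (hIy.mono_set (Set.Ioc_subset_Ioc_left hx))]

lemma mono_on {Ψ ψ : ℝ → ℝ} (h : IsCYFPair Ψ ψ) {x y : ℝ} (hx : 0 ≤ x) (hxy : x ≤ y) :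
    Ψ x ≤ Ψ y := by
  rw [diff_formula h hx hxy]
  have : 0 ≤ ∫ t in Set.Ioc x y, ψ t := by
    apply setIntegral_nonneg measurableSet_Ioc
    intro t ht
    exact (h.1 t (lt_of_le_of_lt hx ht.1)).le
  linarith

lemma nonneg_on {Ψ ψ : ℝ → ℝ} (h : IsCYFPair Ψ ψ) {x : ℝ} (hx : 0 ≤ x) : 0 ≤ Ψ x := by
  have h0 : Ψ 0 = 0 := by rw [h.2.2.2.2.1 0 (by simp)]; simp
  have := mono_on h le_rfl hx
  linarith

lemma upper_on {c : ℝ} (hc : 0 < c) {Ψ ψ : ℝ → ℝ} (h : IsCYFPair Ψ ψ) (hΨc : Ψ c = c)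
    {x : ℝ} (hx : c ≤ x) : Ψ x ≤ x := by
  obtain ⟨hpos, hdec, hrc, hint, hval, htop⟩ := h
  -- ψ c ≤ 1
  have hψc : ψ c ≤ 1 := by
    have h1 : c * ψ c ≤ ∫ t in Set.Ioc 0 c, ψ t := by
      have : ∫ _t in Set.Ioc (0:ℝ) c, ψ c = c * ψ c := by
        rw [setIntegral_const, Real.volume_real_Ioc_of_le hc.le, smul_eq_mul, sub_zero]
      rw [← this]
      apply setIntegral_mono_on (by simp) (hint c hc) measurableSet_Ioc
      intro t ht
      exact hdec t ht.1 c hc (ht.2)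
    rw [← hval c hc.le, hΨc] at h1
    nlinarith
  have h2 : ∫ t in Set.Ioc c x, ψ t ≤ x - c := by
    have hconst : ∫ _t in Set.Ioc c x, (1:ℝ) = x - c := by
      rw [setIntegral_const, Real.volume_real_Ioc_of_le hx, smul_eq_mul, mul_one]
    rw [← hconst]
    apply setIntegral_mono_on
      ((hint x (lt_of_lt_of_le hc hx)).mono_set (Set.Ioc_subset_Ioc_left hc.le))
      (by simp) measurableSet_Ioc
    intro t ht
    exact (hdec c hc t (hc.trans ht.1) ht.1.le).trans hψc
  have := diff_formula ⟨hpos, hdec, hrc, hint, hval, htop⟩ hc.le hx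
  rw [hΨc] at this
  linarith

lemma ub2_on {c : ℝ} (hc : 0 < c) {Ψ ψ : ℝ → ℝ} (h : IsCYFPair Ψ ψ) (hΨc : Ψ c = c)
    {x : ℝ} (hx : 0 ≤ x) : Ψ x ≤ c + x := by
  rcases le_total x c with hxc | hcx
  · have := mono_on h hx hxc; rw [hΨc] at this; linarith
  · have := upper_on hc h hΨc hcx; linarith
-- the identity with constant weight 1
lemma id_pair : IsCYFPair (fun x : ℝ => x) (fun _ => 1) := by
  refine ⟨fun t _ => one_pos, fun _ _ _ _ _ => le_rfl,
    fun t _ => continuousWithinAt_const, fun x _ => integrableOn_const (by simp), ?_, tendsto_id⟩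
  intro x hx
  rw [setIntegral_const, Real.volume_real_Ioc_of_le (by exact hx), smul_eq_mul, sub_zero, mul_one]

-- piecewise-constant construction
noncomputable def phi0 (p β : ℝ) (t : ℝ) : ℝ := if t < β then p else 1/2
noncomputable def Phi0 (p β : ℝ) (x : ℝ) : ℝ := p * min x β + max (x - β) 0 / 2

lemma phi0_meas (p β : ℝ) : Measurable (phi0 p β) := by
  unfold phi0
  exact Measurable.ite (measurableSet_lt measurable_id measurable_const)
    measurable_const measurable_const

lemma phi0_int (p β : ℝ) (hp : 0 < p) {s : Set ℝ} (hs : MeasurableSet s)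
    (hsf : volume s < ⊤) : IntegrableOn (phi0 p β) s := by
  have hg : IntegrableOn (fun _ : ℝ => max p (1/2)) s := integrableOn_const hsf.ne
  refine hg.mono' ((phi0_meas p β).aestronglyMeasurable) ?_
  apply ae_of_all
  intro t
  rw [Real.norm_eq_abs, abs_of_nonneg]
  · unfold phi0; split
    · exact le_max_left _ _
    · exact le_max_right _ _
  · unfold phi0; split
    · exact hp.le
    · norm_num

lemma phi0_integral (p β : ℝ) (hp : 0 < p) (hβ : 0 < β) {x : ℝ} (hx : 0 ≤ x) :
    ∫ t in Set.Ioc 0 x, phi0 p β t = Phi0 p β x := by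
  have hne : ∀ᵐ t : ℝ, t ≠ β := by
    rw [ae_iff]
    have : {t : ℝ | ¬ t ≠ β} = {β} := by ext t; simp
    rw [this, Real.volume_singleton]
  rcases le_total x β with hxβ | hβx
  · have : ∫ t in Set.Ioc 0 x, phi0 p β t = ∫ _t in Set.Ioc 0 x, p := by
      apply integral_congr_ae
      filter_upwards [ae_restrict_mem measurableSet_Ioc, ae_restrict_of_ae hne] with t ht htne
      have : t < β := lt_of_le_of_ne (ht.2.trans hxβ) htne
      simp [phi0, this]
    rw [this, setIntegral_const, Real.volume_real_Ioc_of_le hx, smul_eq_mul, sub_zero]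
    unfold Phi0
    rw [min_eq_left hxβ, max_eq_right (by linarith)]
    ring
  · have hsplit : Set.Ioc (0:ℝ) x = Set.Ioc 0 β ∪ Set.Ioc β x :=
      (Set.Ioc_union_Ioc_eq_Ioc hβ.le hβx).symm
    have hIβ : ∫ t in Set.Ioc (0:ℝ) β, phi0 p β t = p * β := by
      have : ∫ t in Set.Ioc (0:ℝ) β, phi0 p β t = ∫ _t in Set.Ioc (0:ℝ) β, p := by
        apply integral_congr_ae
        filter_upwards [ae_restrict_mem measurableSet_Ioc, ae_restrict_of_ae hne] with t ht htne
        have : t < β := lt_of_le_of_ne ht.2 htne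
        simp [phi0, this]
      rw [this, setIntegral_const, Real.volume_real_Ioc_of_le hβ.le, smul_eq_mul, sub_zero]; ring
    have hIx : ∫ t in Set.Ioc β x, phi0 p β t = (x - β) / 2 := by
      have : ∫ t in Set.Ioc β x, phi0 p β t = ∫ _t in Set.Ioc β x, (1/2 : ℝ) := by
        apply setIntegral_congr_fun measurableSet_Ioc
        intro t ht
        simp [phi0, not_lt.2 ht.1.le]
      rw [this, setIntegral_const, Real.volume_real_Ioc_of_le hβx, smul_eq_mul]; ring
    rw [hsplit, setIntegral_union (Set.Ioc_disjoint_Ioc_of_le le_rfl) measurableSet_Ioc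
      (phi0_int p β hp measurableSet_Ioc (by simp)) (phi0_int p β hp measurableSet_Ioc (by simp)),
      hIβ, hIx]
    unfold Phi0
    rw [min_eq_right hβx, max_eq_left (by linarith)]

lemma Phi0_pair (p β : ℝ) (hp : 1/2 ≤ p) (hβ : 0 < β) : IsCYFPair (Phi0 p β) (phi0 p β) := by
  have hp0 : 0 < p := lt_of_lt_of_le (by norm_num) hp
  refine ⟨?_, ?_, ?_, ?_, ?_, ?_⟩
  · intro t _; unfold phi0; split
    · exact hp0
    · norm_num
  · intro s _ t _ hst; unfold phi0
    by_cases h1 : t < β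
    · rw [if_pos h1, if_pos (lt_of_le_of_lt hst h1)]
    · rw [if_neg h1]; split
      · exact hp
      · exact le_rfl
  · intro t _
    by_cases h1 : t < β
    · have hev : phi0 p β =ᶠ[nhds t] fun _ => p := by
        filter_upwards [Iio_mem_nhds h1] with u hu
        exact if_pos hu
      exact (continuousAt_const.congr hev.symm).continuousWithinAt
    · have : ∀ u ∈ Set.Ici t, phi0 p β u = 1/2 := by
        intro u hu
        exact if_neg (not_lt.2 (le_trans (not_lt.1 h1) hu))
      exact ContinuousWithinAt.congr continuousWithinAt_const this (this t Set.self_mem_Ici)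
  · intro x _; exact phi0_int p β hp0 measurableSet_Ioc (by simp)
  · intro x hx; exact (phi0_integral p β hp0 hβ hx).symm
  · have h1 : Tendsto (fun x : ℝ => x/2 + (p*β - β/2)) atTop atTop :=
      tendsto_atTop_add_const_right atTop _ (Tendsto.atTop_div_const (by norm_num) tendsto_id)
    apply tendsto_atTop_mono' atTop _ h1
    filter_upwards [eventually_ge_atTop β] with x hxβ
    unfold Phi0
    rw [min_eq_right hxβ, max_eq_left (by linarith)]
    exact le_of_eq (by ring)

lemma weight_int : IntegrableOn (fun x : ℝ => 1/(x+1)^2) (Ioi 0) := by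
  have hd : ∀ x ∈ Ioi (0:ℝ), HasDerivAt (fun x : ℝ => -(x+1)⁻¹) (1/(x+1)^2) x := by
    intro x hx
    have h1 : HasDerivAt (fun x : ℝ => x + 1) 1 x := (hasDerivAt_id x).add_const 1
    have h2 := (h1.inv (by simp at hx ⊢; linarith)).neg
    refine h2.congr_deriv ?_
    ring
  have hcont : ContinuousWithinAt (fun x : ℝ => -(x+1)⁻¹) (Ici 0) 0 := by
    apply ContinuousAt.continuousWithinAt
    exact (ContinuousAt.inv₀ (by fun_prop) (by norm_num)).neg
  have hlim : Tendsto (fun x : ℝ => -(x+1)⁻¹) atTop (nhds 0) := by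
    have : Tendsto (fun x : ℝ => (x+1)⁻¹) atTop (nhds 0) :=
      (tendsto_atTop_add_const_right _ 1 tendsto_id).inv_tendsto_atTop
    simpa using this.neg
  exact integrableOn_Ioi_deriv_of_nonneg hcont hd (fun x hx => by positivity) hlim

lemma f_int {b c : ℝ} (hb : 0 < b) (hc : 0 < c) {Φ φ Ψ ψ : ℝ → ℝ}
    (hΦ : IsCYFPair Φ φ) (hΦb : Φ b = b) (hΨ : IsCYFPair Ψ ψ) (hΨc : Ψ c = c) :
    IntegrableOn (fun x => (Φ x - Ψ x)^2/(x+1)^4) (Ioi 0) ∧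
    ∫ x in Ioi 0, (Φ x - Ψ x)^2/(x+1)^4 ≤ ∫ x in Ioi 0, (b+c+2)^2 * (1/(x+1)^2) := by
  have hfnn : ∀ x : ℝ, 0 ≤ (Φ x - Ψ x)^2/(x+1)^4 :=
    fun x => div_nonneg (sq_nonneg _) (by positivity)
  have hbound : ∀ x ∈ Ioi (0:ℝ), (Φ x - Ψ x)^2/(x+1)^4 ≤ (b+c+2)^2 * (1/(x+1)^2) := by
    intro x hx
    have hx0 : (0:ℝ) < x := hx
    have hΦ1 : 0 ≤ Φ x := nonneg_on hΦ hx0.le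
    have hΦ2 : Φ x ≤ b + x := ub2_on hb hΦ hΦb hx0.le
    have hΨ1 : 0 ≤ Ψ x := nonneg_on hΨ hx0.le
    have hΨ2 : Ψ x ≤ c + x := ub2_on hc hΨ hΨc hx0.le
    have hsq : (Φ x - Ψ x)^2 ≤ ((b+c+2)*(x+1))^2 := by
      apply sq_le_sq'
      · nlinarith
      · nlinarith
    have heq : (b+c+2)^2 * (1/(x+1)^2) = ((b+c+2)*(x+1))^2/(x+1)^4 := by
      field_simp
    rw [heq]
    exact div_le_div_of_nonneg_right hsq (by positivity) |>.trans_eq rfl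
  have hmeas : AEStronglyMeasurable (fun x => (Φ x - Ψ x)^2/(x+1)^4)
      (volume.restrict (Ioi (0:ℝ))) := by
    have haΦ : AEMeasurable Φ (volume.restrict (Ioi (0:ℝ))) :=
      aemeasurable_restrict_of_monotoneOn measurableSet_Ioi
        (fun x hx y _ hxy => mono_on hΦ (le_of_lt hx) hxy)
    have haΨ : AEMeasurable Ψ (volume.restrict (Ioi (0:ℝ))) :=
      aemeasurable_restrict_of_monotoneOn measurableSet_Ioi
        (fun x hx y _ hxy => mono_on hΨ (le_of_lt hx) hxy)
    exact (((haΦ.sub haΨ).pow_const 2).div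
      ((measurable_id.add_const 1).pow_const 4).aemeasurable).aestronglyMeasurable
  have hgint : IntegrableOn (fun x : ℝ => (b+c+2)^2 * (1/(x+1)^2)) (Ioi 0) :=
    weight_int.const_mul _
  have hint : IntegrableOn (fun x => (Φ x - Ψ x)^2/(x+1)^4) (Ioi 0) := by
    apply hgint.mono' hmeas
    rw [ae_restrict_iff' measurableSet_Ioi]
    apply ae_of_all
    intro x hx
    rw [Real.norm_eq_abs, abs_of_nonneg (hfnn x)]
    exact hbound x hx
  exact ⟨hint, setIntegral_mono_on hint hgint measurableSet_Ioi hbound⟩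

noncomputable def Kq (b c : ℝ) : ℝ := (|b-c|/3)^2 / (c + |b-c|/6 + 1)^4 * (|b-c|/6)

lemma Kq_pos {b c : ℝ} (hc : 0 < c) (hne : b ≠ c) : 0 < Kq b c := by
  have h1 : 0 < |b - c| := abs_pos.2 (sub_ne_zero.2 hne)
  have h2 : (0:ℝ) < c + |b-c|/6 + 1 := by linarith
  unfold Kq
  positivity

lemma lower_bound {b c : ℝ} (hb : 0 < b) (hc : 0 < c) (hne : b ≠ c) {Ψ ψ : ℝ → ℝ}
    (hΨ : IsCYFPair Ψ ψ) (hΨc : Ψ c = c) :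
    Kq b c ≤ ∫ x in Ioi 0,
      (Phi0 ((b + min b c)/(2*min b c)) (min b c) x - Ψ x)^2/(x+1)^4 := by
  set β := min b c with hβdef
  set p := (b + β)/(2*β) with hpdef
  have hβ : 0 < β := lt_min hb hc
  have hβb : β ≤ b := min_le_left _ _
  have hβc : β ≤ c := min_le_right _ _
  have hp : 1/2 ≤ p := by
    rw [hpdef, le_div_iff₀ (by linarith)]
    linarith
  have hpβ : p * β = (b + β)/2 := by
    rw [hpdef]; field_simp
  have hpair := Phi0_pair p β hp hβ
  have hΦb : Phi0 p β b = b := by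
    unfold Phi0
    rw [min_eq_right hβb, max_eq_left (by linarith), hpβ]
    ring
  set h := |b - c|/6 with hhdef
  set ρ := |b - c|/3 with hρdef
  have habs : 0 < |b - c| := abs_pos.2 (sub_ne_zero.2 hne)
  have hh : 0 < h := by rw [hhdef]; linarith
  have hρ0 : 0 < ρ := by rw [hρdef]; linarith
  have hfint := (f_int hb hc hpair hΦb hΨ hΨc).1
  -- pointwise lower bound on Ioc c (c+h)
  have hpt : ∀ x ∈ Ioc c (c + h), ρ^2/(c+h+1)^4 ≤ (Phi0 p β x - Ψ x)^2/(x+1)^4 := by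
    intro x hx
    have hx1 : c < x := hx.1
    have hx2 : x ≤ c + h := hx.2
    have hΦx : Phi0 p β x = (b + x)/2 := by
      unfold Phi0
      rw [min_eq_right (by linarith), max_eq_left (by linarith), hpβ]
      ring
    have hΨ1 : Ψ x ≤ x := upper_on hc hΨ hΨc hx1.le
    have hΨ2 : c ≤ Ψ x := by
      have := mono_on hΨ hc.le hx1.le
      rwa [hΨc] at this
    have hkey : ρ ≤ |Phi0 p β x - Ψ x| := by
      rcases lt_or_gt_of_ne hne with hlt | hgt
      · -- b < c : Ψ - Φ0 is large
        have habs2 : |b - c| = c - b := by rw [abs_of_neg (by linarith)]; ring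
        apply le_abs.2 (Or.inr _)
        rw [hΦx]
        rw [hρdef, habs2]
        rw [hhdef, habs2] at hx2
        linarith
      · -- c < b
        have habs2 : |b - c| = b - c := abs_of_pos (by linarith)
        apply le_abs.2 (Or.inl _)
        rw [hΦx]
        rw [hρdef, habs2]
        rw [hhdef, habs2] at hx2
        linarith
    have hnum : ρ^2 ≤ (Phi0 p β x - Ψ x)^2 := by
      have := pow_le_pow_left₀ hρ0.le hkey 2
      rwa [sq_abs] at this
    have hden : (x+1)^4 ≤ (c+h+1)^4 := pow_le_pow_left₀ (by linarith) (by linarith) 4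
    exact div_le_div₀ (sq_nonneg _) hnum (pow_pos (by linarith : (0:ℝ) < x+1) 4) hden
  have hsub : Ioc c (c + h) ⊆ Ioi (0:ℝ) := fun x hx => hc.trans hx.1
  have step1 : ∫ x in Ioc c (c+h), (Phi0 p β x - Ψ x)^2/(x+1)^4 ≤
      ∫ x in Ioi 0, (Phi0 p β x - Ψ x)^2/(x+1)^4 := by
    apply setIntegral_mono_set hfint
    · exact ae_of_all _ (fun x => div_nonneg (sq_nonneg _) (by positivity))
    · exact HasSubset.Subset.eventuallyLE hsub
  have step2 : ∫ _x in Ioc c (c+h), ρ^2/(c+h+1)^4 ≤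
      ∫ x in Ioc c (c+h), (Phi0 p β x - Ψ x)^2/(x+1)^4 := by
    apply setIntegral_mono_on (integrableOn_const (by simp))
      (hfint.mono_set hsub) measurableSet_Ioc hpt
  have step0 : ∫ _x in Ioc c (c+h), ρ^2/(c+h+1)^4 = Kq b c := by
    rw [setIntegral_const, Real.volume_real_Ioc_of_le (by linarith : c ≤ c + h), smul_eq_mul]
    unfold Kq
    rw [← hρdef, ← hhdef]
    ring
  linarith [step0 ▸ step2, step1]

lemma dY_self (Φ : ℝ → ℝ) : dY Φ Φ = 0 := by
  unfold dY
  simp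

lemma id_mem_Yb (b : ℝ) (hb : 0 < b) : (fun x : ℝ => x) ∈ Yb b :=
  ⟨⟨_, id_pair⟩, rfl⟩

lemma sInf_self_zero {b : ℝ} {Φ : ℝ → ℝ} (hΦ : Φ ∈ Yb b) :
    sInf {s : ℝ | ∃ Ψ ∈ Yb b, s = dY Φ Ψ} = 0 := by
  apply le_antisymm
  · exact csInf_le ⟨0, by rintro s ⟨Ψ, _, rfl⟩; exact Real.sqrt_nonneg _⟩
      ⟨Φ, hΦ, (dY_self Φ).symm⟩
  · exact le_csInf ⟨0, Φ, hΦ, (dY_self Φ).symm⟩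
      (by rintro s ⟨Ψ, _, rfl⟩; exact Real.sqrt_nonneg _)

theorem stmt_13 (b c : ℝ) (hb : 0 < b) (hc : 0 < c) :
    (b = c ↔ Yb b = Yb c) ∧ (b = c ↔ distSet (Yb b) (Yb c) = 0) := by
  have hβ : 0 < min b c := lt_min hb hc
  have hβb : min b c ≤ b := min_le_left _ _
  have hβc : min b c ≤ c := min_le_right _ _
  have hp : 1/2 ≤ (b + min b c)/(2*min b c) := by
    rw [le_div_iff₀ (by linarith)]
    linarith
  have hpβ : (b + min b c)/(2*min b c) * min b c = (b + min b c)/2 := by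
    field_simp
  have hpair := Phi0_pair ((b + min b c)/(2*min b c)) (min b c) hp hβ
  have hΦb : Phi0 ((b + min b c)/(2*min b c)) (min b c) b = b := by
    unfold Phi0
    rw [min_eq_right hβb, max_eq_left (by linarith), hpβ]
    ring
  have hmem : Phi0 ((b + min b c)/(2*min b c)) (min b c) ∈ Yb b := ⟨⟨_, hpair⟩, hΦb⟩
  constructor
  · constructor
    · rintro rfl; rfl
    · intro hEq
      by_contra hne
      rw [hEq] at hmem
      have hc2 : Phi0 ((b + min b c)/(2*min b c)) (min b c) c = c := hmem.2
      have hΦc : Phi0 ((b + min b c)/(2*min b c)) (min b c) c = (b + c)/2 := by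
        unfold Phi0
        rw [min_eq_right hβc, max_eq_left (by linarith), hpβ]
        ring
      rw [hΦc] at hc2
      exact hne (by linarith)
  · constructor
    · rintro rfl
      have hR : {r : ℝ | ∃ Φ ∈ Yb b, r = sInf {s : ℝ | ∃ Ψ ∈ Yb b, s = dY Φ Ψ}}
          = {0} := by
        apply Set.eq_singleton_iff_unique_mem.2
        constructor
        · exact ⟨_, id_mem_Yb b hb, (sInf_self_zero (id_mem_Yb b hb)).symm⟩
        · rintro r ⟨Φ, hΦ, rfl⟩
          exact sInf_self_zero hΦ
      unfold distSet
      rw [hR]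
      exact csSup_singleton 0
    · intro hd
      by_contra hne
      have hidc := id_mem_Yb c hc
      have hBdd : BddAbove {r : ℝ | ∃ Φ ∈ Yb b,
          r = sInf {s : ℝ | ∃ Ψ ∈ Yb c, s = dY Φ Ψ}} := by
        refine ⟨Real.sqrt (∫ x in Ioi 0, (b+c+2)^2 * (1/(x+1)^2)), ?_⟩
        rintro r ⟨Φ, hΦ, rfl⟩
        obtain ⟨φ, hφ⟩ := hΦ.1
        have h1 : dY Φ (fun x => x) ∈ {s : ℝ | ∃ Ψ ∈ Yb c, s = dY Φ Ψ} :=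
          ⟨_, hidc, rfl⟩
        have h2 : dY Φ (fun x => x) ≤
            Real.sqrt (∫ x in Ioi 0, (b+c+2)^2 * (1/(x+1)^2)) :=
          Real.sqrt_le_sqrt (f_int hb hc hφ hΦ.2 id_pair rfl).2
        exact (csInf_le ⟨0, by rintro s ⟨Ψ, _, rfl⟩; exact Real.sqrt_nonneg _⟩ h1).trans h2
      have hmemR : sInf {s : ℝ | ∃ Ψ ∈ Yb c,
            s = dY (Phi0 ((b + min b c)/(2*min b c)) (min b c)) Ψ} ∈
          {r : ℝ | ∃ Φ ∈ Yb b, r = sInf {s : ℝ | ∃ Ψ ∈ Yb c, s = dY Φ Ψ}} :=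
        ⟨_, hmem, rfl⟩
      have hlow : Real.sqrt (Kq b c) ≤ sInf {s : ℝ | ∃ Ψ ∈ Yb c,
          s = dY (Phi0 ((b + min b c)/(2*min b c)) (min b c)) Ψ} := by
        refine le_csInf ⟨_, ⟨_, hidc, rfl⟩⟩ ?_
        rintro s ⟨Ψ, hΨ, rfl⟩
        obtain ⟨ψ, hψ⟩ := hΨ.1
        exact Real.sqrt_le_sqrt (lower_bound hb hc hne hψ hΨ.2)
      have hchain : Real.sqrt (Kq b c) ≤ distSet (Yb b) (Yb c) :=
        hlow.trans (le_csSup hBdd hmemR)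
      have hpos : 0 < Real.sqrt (Kq b c) := Real.sqrt_pos.2 (Kq_pos hc hne)
      rw [hd] at hchain
      linarith
end

section
/- For every b ∈ (0,∞), the set 𝒜_b = {Φ ∈ 𝒜 : Φ(b) = b} is dense in 𝒴_b = {Φ ∈ 𝒴_conc : Φ(b) = b} with respect to the semi-metric d(Φ,Ψ) = (∫₀^∞ (Φ−Ψ)²/(x+1)⁴ dx)^{1/2}: for every Ψ ∈ 𝒴_b there is a sequence (Ψ_n) ⊂ 𝒜_b with d(Ψ, Ψ_n) → 0. One may take Ψ_n(x) = b·Φ(x)^{1−1/(n+1)}/Φ(b)^{1−1/(n+1)} where Ψ = bΦ/Φ(b). -/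
open MeasureTheory Set Filter

namespace S15

noncomputable def gfun (φ : ℝ → ℝ) (c : ℝ) (t : ℝ) : ℝ := φ c * Real.sqrt (c / t)
noncomputable def phic (φ : ℝ → ℝ) (c : ℝ) (t : ℝ) : ℝ := if t ≤ c then φ t else gfun φ c t
noncomputable def Phic (φ : ℝ → ℝ) (c : ℝ) (x : ℝ) : ℝ := ∫ t in Set.Ioc 0 x, phic φ c t

variable {Ψ φ : ℝ → ℝ} {b c : ℝ}

lemma phic_pos (h : IsCYFPair Ψ φ) (hc : 0 < c) :
    ∀ t ∈ Set.Ioi (0:ℝ), 0 < phic φ c t := by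
  intro t ht
  unfold phic gfun
  split_ifs with h'
  · exact h.1 t ht
  · exact mul_pos (h.1 c hc) (Real.sqrt_pos.2 (div_pos hc ht))

lemma phic_anti (h : IsCYFPair Ψ φ) (hc : 0 < c) :
    ∀ s ∈ Set.Ioi (0:ℝ), ∀ t ∈ Set.Ioi (0:ℝ), s ≤ t → phic φ c t ≤ phic φ c s := by
  intro s hs t ht hst
  have hφc := (h.1 c hc).le
  unfold phic gfun
  split_ifs with h1 h2 h2
  · exact h.2.1 s hs t ht hst
  · exact absurd (hst.trans h1) h2
  · -- ¬ t ≤ c, s ≤ c : φ c * √(c/t) ≤ φ s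
    push_neg at h1
    have hsq : Real.sqrt (c / t) ≤ 1 :=
      Real.sqrt_le_one.2 (div_le_one_of_le₀ h1.le (le_of_lt ht))
    calc φ c * Real.sqrt (c / t) ≤ φ c * 1 := mul_le_mul_of_nonneg_left hsq hφc
      _ = φ c := mul_one _
      _ ≤ φ s := h.2.1 s hs c hc h2
  · push_neg at h1 h2
    have hs0 : (0:ℝ) < s := hs
    have : c / t ≤ c / s := by gcongr
    exact mul_le_mul_of_nonneg_left (Real.sqrt_le_sqrt this) hφc

lemma phic_le_phi_of_ge (h : IsCYFPair Ψ φ) (hc : 0 < c) {s : ℝ} (hs : 0 < s) (hsc : s ≤ c) :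
    ∀ t, c < t → phic φ c t ≤ φ s := by
  intro t hct
  have h1 : phic φ c t = gfun φ c t := if_neg (not_le.2 hct)
  rw [h1]
  unfold gfun
  have h2 : Real.sqrt (c / t) ≤ 1 :=
    Real.sqrt_le_one.2 (div_le_one_of_le₀ (le_of_lt hct) (by linarith [hs.trans_le hsc]))
  calc φ c * Real.sqrt (c / t) ≤ φ c * 1 :=
        mul_le_mul_of_nonneg_left h2 (h.1 c hc).le
    _ = φ c := mul_one _
    _ ≤ φ s := h.2.1 s hs c hc hsc

end S15

namespace S15b
open S15
variable {Ψ φ : ℝ → ℝ} {b c : ℝ}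

lemma gcont (φ : ℝ → ℝ) (c : ℝ) {t : ℝ} (ht : t ≠ 0) : ContinuousAt (gfun φ c) t := by
  unfold gfun
  exact continuousAt_const.mul
    (Real.continuous_sqrt.continuousAt.comp (continuousAt_const.div continuousAt_id ht))

lemma gfun_c (h : IsCYFPair Ψ φ) (hc : 0 < c) : gfun φ c c = φ c := by
  unfold gfun; rw [div_self hc.ne', Real.sqrt_one, mul_one]

lemma phic_rcont (h : IsCYFPair Ψ φ) (hc : 0 < c) :
    ∀ t ∈ Set.Ioi (0:ℝ), ContinuousWithinAt (phic φ c) (Set.Ici t) t := by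
  intro t ht
  have ht0 : (0:ℝ) < t := ht
  rcases lt_trichotomy t c with htc | rfl | hct
  · -- t < c : phic = φ near t
    refine (h.2.2.1 t ht).congr_of_eventuallyEq ?_ (if_pos htc.le)
    have hmem : {u : ℝ | u < c} ∈ nhdsWithin t (Set.Ici t) :=
      nhdsWithin_le_nhds (Iio_mem_nhds htc)
    filter_upwards [hmem] with u hu
    exact if_pos hu.le
  · -- t = c : squeeze between min and max
    have hgct : ContinuousWithinAt (gfun φ t) (Set.Ici t) t := (gcont φ t ht0.ne').continuousWithinAt
    have hφct := h.2.2.1 t ht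
    have hmin : Tendsto (fun u => min (φ u) (gfun φ t u)) (nhdsWithin t (Set.Ici t))
        (nhds (phic φ t t)) := by
      have := hφct.tendsto.min hgct.tendsto
      rwa [gfun_c h ht0, min_self, show φ t = phic φ t t from (if_pos le_rfl).symm] at this
    have hmax : Tendsto (fun u => max (φ u) (gfun φ t u)) (nhdsWithin t (Set.Ici t))
        (nhds (phic φ t t)) := by
      have := hφct.tendsto.max hgct.tendsto
      rwa [gfun_c h ht0, max_self, show φ t = phic φ t t from (if_pos le_rfl).symm] at this
    refine tendsto_of_tendsto_of_tendsto_of_le_of_le hmin hmax ?_ ?_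
    · intro u; unfold phic; split_ifs
      exacts [min_le_left _ _, min_le_right _ _]
    · intro u; unfold phic; split_ifs
      exacts [le_max_left _ _, le_max_right _ _]
  · -- c < t : phic = gfun near t
    refine ((gcont φ c ht0.ne').continuousWithinAt).congr_of_eventuallyEq ?_
      (if_neg (not_le.2 hct))
    have hmem : {u : ℝ | c < u} ∈ nhdsWithin t (Set.Ici t) :=
      nhdsWithin_le_nhds (Ioi_mem_nhds hct)
    filter_upwards [hmem] with u hu
    exact if_neg (not_le.2 hu)

lemma phic_integrableOn (h : IsCYFPair Ψ φ) (hc : 0 < c) :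
    ∀ x ∈ Set.Ioi (0:ℝ), IntegrableOn (phic φ c) (Set.Ioc 0 x) := by
  intro x hx
  have hx0 : (0:ℝ) < x := hx
  rcases le_or_gt x c with hxc | hcx
  · exact ((h.2.2.2.1 x hx).congr_fun (fun t ht => (if_pos (ht.2.trans hxc)).symm)
      measurableSet_Ioc)
  · have h1 : IntegrableOn (phic φ c) (Set.Ioc 0 c) :=
      ((h.2.2.2.1 c hc).congr_fun (fun t ht => (if_pos ht.2).symm) measurableSet_Ioc)
    have h2 : IntegrableOn (phic φ c) (Set.Ioc c x) := by
      have hgint : IntegrableOn (gfun φ c) (Set.Icc c x) := by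
        refine ContinuousOn.integrableOn_Icc ?_
        intro u hu
        exact (gcont φ c (by linarith [hu.1] : u ≠ 0)).continuousWithinAt
      exact ((hgint.mono_set Set.Ioc_subset_Icc_self).congr_fun
        (fun t ht => (if_neg (not_le.2 ht.1)).symm) measurableSet_Ioc)
    have := h1.union h2
    rwa [Set.Ioc_union_Ioc_eq_Ioc hc.le hcx.le] at this

end S15b

namespace S15c
open S15 S15b
variable {Ψ φ : ℝ → ℝ} {b c : ℝ}

lemma sqrt_tendsto : Tendsto Real.sqrt atTop atTop := by
  have h := tendsto_rpow_atTop (y := (1/2:ℝ)) (by norm_num)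
  refine h.congr' ?_
  filter_upwards [eventually_ge_atTop (0:ℝ)] with x hx
  rw [Real.sqrt_eq_rpow]

lemma phic_div_integrable (h : IsCYFPair Ψ φ) (hc1 : 1 ≤ c) :
    IntegrableOn (fun t => phic φ c t / t) (Set.Ioi 1) := by
  have hc0 : (0:ℝ) < c := lt_of_lt_of_le one_pos hc1
  have part1 : IntegrableOn (fun t => phic φ c t / t) (Set.Ioc 1 c) := by
    have hφint : IntegrableOn φ (Set.Ioc 1 c) :=
      (h.2.2.2.1 c hc0).mono_set (Set.Ioc_subset_Ioc (by norm_num) le_rfl)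
    have hmeas : AEStronglyMeasurable (fun t => phic φ c t / t)
        (volume.restrict (Set.Ioc 1 c)) := by
      have h1 : AEStronglyMeasurable φ (volume.restrict (Set.Ioc 1 c)) :=
        hφint.aestronglyMeasurable
      have h2 : AEStronglyMeasurable (fun t : ℝ => t⁻¹) (volume.restrict (Set.Ioc 1 c)) :=
        measurable_inv.aestronglyMeasurable
      refine (h1.mul h2).congr ?_
      filter_upwards [ae_restrict_mem measurableSet_Ioc] with t ht
      simp [phic, if_pos ht.2, div_eq_mul_inv]
    refine Integrable.mono' hφint hmeas ?_
    filter_upwards [ae_restrict_mem measurableSet_Ioc] with t ht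
    have ht1 : (1:ℝ) ≤ t := ht.1.le
    have hφpos := (h.1 t (lt_trans one_pos ht.1)).le
    have : phic φ c t = φ t := if_pos ht.2
    rw [this, Real.norm_eq_abs, abs_of_nonneg (div_nonneg hφpos (by linarith))]
    exact div_le_self hφpos ht1
  have part2 : IntegrableOn (fun t => phic φ c t / t) (Set.Ioi c) := by
    have hint : IntegrableOn (fun t : ℝ => t ^ (-(3/2):ℝ)) (Set.Ioi c) :=
      integrableOn_Ioi_rpow_of_lt (by norm_num) hc0
    have hint2 : IntegrableOn (fun t : ℝ => (φ c * Real.sqrt c) * t ^ (-(3/2):ℝ))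
        (Set.Ioi c) := hint.const_mul _
    refine hint2.congr_fun ?_ measurableSet_Ioi
    intro t ht
    have ht0 : (0:ℝ) < t := hc0.trans ht
    have hst : (0:ℝ) < Real.sqrt t := Real.sqrt_pos.2 ht0
    have h32 : t ^ (-(3/2):ℝ) = (Real.sqrt t * t)⁻¹ := by
      rw [Real.rpow_neg ht0.le]
      congr 1
      have hh : Real.sqrt t * t = t ^ (1/2:ℝ) * t ^ (1:ℝ) := by
        rw [Real.sqrt_eq_rpow, Real.rpow_one]
      rw [hh, ← Real.rpow_add ht0]
      norm_num
    have hphic : phic φ c t = φ c * (Real.sqrt c / Real.sqrt t) := by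
      unfold phic gfun
      rw [if_neg (not_le.2 ht), Real.sqrt_div hc0.le]
    show (φ c * Real.sqrt c) * t ^ (-(3/2):ℝ) = phic φ c t / t
    rw [h32, hphic]
    field_simp
  have := part1.union part2
  rwa [Set.Ioc_union_Ioi_eq_Ioi hc1] at this

end S15c

namespace S15d
open S15 S15b S15c
variable {Ψ φ : ℝ → ℝ} {b c : ℝ}

lemma phic_nonneg_ae (h : IsCYFPair Ψ φ) (hc : 0 < c) {s : Set ℝ} (hs : MeasurableSet s)
    (hsub : s ⊆ Set.Ioi 0) : 0 ≤ᵐ[volume.restrict s] phic φ c := by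
  filter_upwards [ae_restrict_mem hs] with t ht
  exact (phic_pos h hc t (hsub ht)).le

lemma Phic_nonneg (h : IsCYFPair Ψ φ) (hc : 0 < c) (x : ℝ) : 0 ≤ Phic φ c x :=
  setIntegral_nonneg measurableSet_Ioc (fun t ht => (phic_pos h hc t ht.1).le)

lemma Phic_mono (h : IsCYFPair Ψ φ) (hc : 0 < c) : Monotone (Phic φ c) := by
  intro x y hxy
  rcases le_or_gt x 0 with hx0 | hx0
  · have : Set.Ioc (0:ℝ) x = ∅ := Set.Ioc_eq_empty (by intro hh; linarith [hh])
    unfold Phic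
    rw [this]
    simp
    exact Phic_nonneg h hc y
  · refine setIntegral_mono_set (phic_integrableOn h hc y (hx0.trans_le hxy))
      (phic_nonneg_ae h hc measurableSet_Ioc Set.Ioc_subset_Ioi_self)
      (HasSubset.Subset.eventuallyLE (Set.Ioc_subset_Ioc le_rfl hxy))

lemma Phic_tendsto (h : IsCYFPair Ψ φ) (hc1 : 1 ≤ c) :
    Tendsto (Phic φ c) atTop atTop := by
  have hc0 : (0:ℝ) < c := lt_of_lt_of_le one_pos hc1
  set K := φ c * Real.sqrt c with hKdef
  have hK : 0 < K := mul_pos (h.1 c hc0) (Real.sqrt_pos.2 hc0)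
  have key : ∀ x, max 1 (c+1) ≤ x → K * (Real.sqrt x - c) ≤ Phic φ c x := by
    intro x hx
    have hx1 : (1:ℝ) ≤ x := le_trans (le_max_left _ _) hx
    have hcx : c + 1 ≤ x := le_trans (le_max_right _ _) hx
    have hx0 : (0:ℝ) < x := by linarith
    have hsx : (0:ℝ) < Real.sqrt x := Real.sqrt_pos.2 hx0
    have hsx1 : (1:ℝ) ≤ Real.sqrt x := by
      rw [show (1:ℝ) = Real.sqrt 1 by simp]
      exact Real.sqrt_le_sqrt hx1
    have step1 : (x - c) * (φ c * Real.sqrt (c / x)) ≤ ∫ t in Set.Ioc c x, phic φ c t := by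
      have hconst : ∫ t in Set.Ioc c x, (φ c * Real.sqrt (c / x)) =
          (x - c) * (φ c * Real.sqrt (c / x)) := by
        rw [setIntegral_const]
        simp [Real.volume_Ioc, ENNReal.toReal_ofReal (by linarith : (0:ℝ) ≤ x - c), smul_eq_mul]
        exact Or.inl (by linarith)
      rw [← hconst]
      refine setIntegral_mono_on (integrableOn_const measure_Ioc_lt_top.ne)
        ((phic_integrableOn h hc0 x hx0).mono_set (Set.Ioc_subset_Ioc hc0.le le_rfl))
        measurableSet_Ioc ?_
      intro t ht
      have h1 : phic φ c t = φ c * Real.sqrt (c / t) := if_neg (not_le.2 ht.1)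
      rw [h1]
      have : c / x ≤ c / t := by
        have ht0 : (0:ℝ) < t := hc0.trans ht.1
        gcongr
        exact ht.2
      exact mul_le_mul_of_nonneg_left (Real.sqrt_le_sqrt this) (h.1 c hc0).le
    have step2 : ∫ t in Set.Ioc c x, phic φ c t ≤ Phic φ c x := by
      refine setIntegral_mono_set (phic_integrableOn h hc0 x hx0)
        (phic_nonneg_ae h hc0 measurableSet_Ioc Set.Ioc_subset_Ioi_self)
        (HasSubset.Subset.eventuallyLE (Set.Ioc_subset_Ioc hc0.le le_rfl))
    have step3 : (x - c) * (φ c * Real.sqrt (c / x)) = K * ((x - c) / Real.sqrt x) := by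
      rw [hKdef, Real.sqrt_div hc0.le]
      field_simp
    have step4 : Real.sqrt x - c ≤ (x - c) / Real.sqrt x := by
      rw [le_div_iff₀ hsx]
      nlinarith [Real.mul_self_sqrt hx0.le]
    calc K * (Real.sqrt x - c) ≤ K * ((x - c) / Real.sqrt x) :=
          mul_le_mul_of_nonneg_left step4 hK.le
      _ = (x - c) * (φ c * Real.sqrt (c / x)) := step3.symm
      _ ≤ ∫ t in Set.Ioc c x, phic φ c t := step1
      _ ≤ Phic φ c x := step2
  have htendK : Tendsto (fun x => K * (Real.sqrt x - c)) atTop atTop := by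
    have h1 : Tendsto (fun x => Real.sqrt x - c) atTop atTop := by
      simpa [sub_eq_add_neg] using tendsto_atTop_add_const_right atTop (-c) sqrt_tendsto
    exact h1.const_mul_atTop hK
  refine tendsto_atTop_mono' atTop ?_ htendK
  filter_upwards [eventually_ge_atTop (max 1 (c+1))] with x hx
  exact key x hx

lemma Phic_pair (h : IsCYFPair Ψ φ) (hc1 : 1 ≤ c) : IsCYFPair (Phic φ c) (phic φ c) := by
  have hc0 : (0:ℝ) < c := lt_of_lt_of_le one_pos hc1
  exact ⟨phic_pos h hc0, phic_anti h hc0, phic_rcont h hc0, phic_integrableOn h hc0,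
    fun x _ => rfl, Phic_tendsto h hc1⟩

lemma Phic_eq (h : IsCYFPair Ψ φ) (hc1 : 1 ≤ c) {x : ℝ} (hx0 : 0 ≤ x) (hx : x ≤ c) :
    Phic φ c x = Ψ x := by
  rw [h.2.2.2.2.1 x hx0]
  exact setIntegral_congr_fun measurableSet_Ioc (fun t ht => if_pos (ht.2.trans hx))

end S15d

namespace S15e
open S15 S15b S15c S15d
variable {Ψ φ : ℝ → ℝ} {b : ℝ}

lemma G_meas (b : ℝ) : Measurable (fun x : ℝ => (x+b)^2/(x+1)^4) := by
  apply Measurable.div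
  · exact (measurable_id.add_const b).pow_const 2
  · exact (measurable_id.add_const 1).pow_const 4

lemma G_integrable (hb : 0 < b) :
    IntegrableOn (fun x : ℝ => (x+b)^2/(x+1)^4) (Set.Ioi 0) := by
  have part1 : IntegrableOn (fun x : ℝ => (x+b)^2/(x+1)^4) (Set.Ioc 0 1) := by
    have hcont : ContinuousOn (fun x : ℝ => (x+b)^2/(x+1)^4) (Set.Icc 0 1) := by
      apply ContinuousOn.div
      · fun_prop
      · fun_prop
      · intro x hx
        have : (0:ℝ) < x + 1 := by linarith [hx.1]
        positivity
    exact hcont.integrableOn_Icc.mono_set Set.Ioc_subset_Icc_self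
  have part2 : IntegrableOn (fun x : ℝ => (x+b)^2/(x+1)^4) (Set.Ioi 1) := by
    have hint : IntegrableOn (fun x : ℝ => (1+b)^2 * x ^ (-2:ℝ)) (Set.Ioi 1) :=
      (integrableOn_Ioi_rpow_of_lt (by norm_num) one_pos).const_mul _
    refine Integrable.mono' hint ((G_meas b).aestronglyMeasurable) ?_
    filter_upwards [ae_restrict_mem measurableSet_Ioi] with x hx
    have hx1 : (1:ℝ) < x := hx
    have hx0 : (0:ℝ) < x := lt_trans one_pos hx1
    have hrpow : x ^ (-2:ℝ) = (x^2)⁻¹ := by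
      rw [show (-2:ℝ) = -((2:ℕ):ℝ) by norm_num, Real.rpow_neg hx0.le, Real.rpow_natCast]
    rw [hrpow, Real.norm_eq_abs, abs_of_nonneg (by positivity), ← div_eq_mul_inv,
      div_le_div_iff₀ (by positivity) (by positivity)]
    have e2 : (x+b)*x ≤ (1+b)*(x+1)^2 := by nlinarith
    have e3 : (0:ℝ) ≤ (x+b)*x := by positivity
    nlinarith [e2, e3, mul_le_mul e2 e2 e3 (by positivity : (0:ℝ) ≤ (1+b)*(x+1)^2)]
  have := part1.union part2
  rwa [Set.Ioc_union_Ioi_eq_Ioi (by norm_num : (0:ℝ) ≤ 1)] at this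

end S15e

namespace S15f

variable {Φ φ : ℝ → ℝ} {b : ℝ}

/-- integral of φ over Ioc 0 b is at least b * φ b -/
lemma int_ge (h : IsCYFPair Φ φ) (hb : 0 < b) :
    b * φ b ≤ ∫ t in Set.Ioc 0 b, φ t := by
  obtain ⟨h1, h2, h3, h4, h5, h6⟩ := h
  have : ∫ t in Set.Ioc 0 b, φ b ≤ ∫ t in Set.Ioc 0 b, φ t := by
    exact setIntegral_mono_on (integrableOn_const measure_Ioc_lt_top.ne) (h4 b hb)
      measurableSet_Ioc (fun t ht => h2 t ht.1 b hb ht.2)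
  calc b * φ b = (volume (Set.Ioc (0:ℝ) b)).toReal • φ b := by
        simp [Real.volume_Ioc, ENNReal.toReal_ofReal hb.le, smul_eq_mul, mul_comm]
    _ = ∫ t in Set.Ioc 0 b, φ b := (setIntegral_const _).symm
    _ ≤ _ := this

lemma int_seg_le (h : IsCYFPair Φ φ) (hb : 0 < b) {x : ℝ} (hx : b ≤ x) :
    ∫ t in Set.Ioc b x, φ t ≤ (x - b) * φ b := by
  obtain ⟨h1, h2, h3, h4, h5, h6⟩ := h
  have hint : IntegrableOn φ (Set.Ioc b x) :=
    (h4 x (lt_of_lt_of_le hb hx)).mono_set (Set.Ioc_subset_Ioc (le_of_lt hb) le_rfl)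
  have : ∫ t in Set.Ioc b x, φ t ≤ ∫ t in Set.Ioc b x, φ b := by
    exact setIntegral_mono_on hint (integrableOn_const measure_Ioc_lt_top.ne)
      measurableSet_Ioc (fun t ht => h2 b hb t (hb.trans ht.1) (le_of_lt ht.1))
  calc ∫ t in Set.Ioc b x, φ t ≤ ∫ t in Set.Ioc b x, φ b := this
    _ = (volume (Set.Ioc b x)).toReal • φ b := setIntegral_const _
    _ = (x - b) * φ b := by
        simp [Real.volume_Ioc, ENNReal.toReal_ofReal (sub_nonneg.2 hx), smul_eq_mul]

lemma phi_b_le_one (h : IsCYFPair Φ φ) (hb : 0 < b) (hΦb : Φ b = b) : φ b ≤ 1 := by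
  have h5 := h.2.2.2.2.1
  have := int_ge h hb
  rw [← h5 b (le_of_lt hb), hΦb] at this
  nlinarith

lemma nonneg (h : IsCYFPair Φ φ) {x : ℝ} (hx : 0 ≤ x) : 0 ≤ Φ x := by
  obtain ⟨h1, h2, h3, h4, h5, h6⟩ := h
  rw [h5 x hx]
  exact setIntegral_nonneg measurableSet_Ioc (fun t ht => (h1 t ht.1).le)

lemma growth (h : IsCYFPair Φ φ) (hb : 0 < b) (hΦb : Φ b = b) {x : ℝ} (hx : 0 ≤ x) :
    Φ x ≤ x + b := by
  obtain ⟨h1, h2, h3, h4, h5, h6⟩ := h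
  rcases le_or_gt x b with hxb | hbx
  · -- Φ x ≤ Φ b = b ≤ x + b
    have : Φ x ≤ Φ b := by
      rw [h5 x hx, h5 b hb.le]
      rcases eq_or_lt_of_le hx with h0 | h0
      · simp [← h0]
        exact setIntegral_nonneg measurableSet_Ioc (fun t ht => (h1 t ht.1).le)
      · refine setIntegral_mono_set (h4 b hb) ?_ (HasSubset.Subset.eventuallyLE (Set.Ioc_subset_Ioc le_rfl hxb))
        filter_upwards [ae_restrict_mem measurableSet_Ioc] with t ht using (h1 t ht.1).le
    linarith [this, hΦb]
  · have hsplit : Φ x = Φ b + ∫ t in Set.Ioc b x, φ t := by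
      rw [h5 x hx, h5 b hb.le, ← setIntegral_union (Set.Ioc_disjoint_Ioc_of_le le_rfl) measurableSet_Ioc
        (h4 b hb) ((h4 x (hb.trans hbx)).mono_set (Set.Ioc_subset_Ioc hb.le le_rfl)),
        Set.Ioc_union_Ioc_eq_Ioc hb.le hbx.le]
    have h1' : ∫ t in Set.Ioc b x, φ t ≤ (x - b) * φ b :=
      int_seg_le ⟨h1, h2, h3, h4, h5, h6⟩ hb hbx.le
    have h2' : φ b ≤ 1 := phi_b_le_one ⟨h1, h2, h3, h4, h5, h6⟩ hb hΦb
    have h3' : (0:ℝ) ≤ x - b := by linarith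
    nlinarith [hsplit, h1', h2', h3']

end S15f

namespace S15g
open S15 S15b S15c S15d S15e S15f
variable {Ψ φ : ℝ → ℝ} {b : ℝ}

lemma prim_mono (h : IsCYFPair Ψ φ) :
    Monotone (fun x => ∫ t in Set.Ioc 0 x, φ t) := by
  intro x y hxy
  rcases le_or_gt x 0 with hx0 | hx0
  · have : Set.Ioc (0:ℝ) x = ∅ := Set.Ioc_eq_empty (by intro hh; linarith [hh])
    simp only [this, setIntegral_empty]
    rcases le_or_gt y 0 with hy0 | hy0
    · have : Set.Ioc (0:ℝ) y = ∅ := Set.Ioc_eq_empty (by intro hh; linarith [hh])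
      simp [this]
    · exact setIntegral_nonneg measurableSet_Ioc (fun t ht => (h.1 t ht.1).le)
  · refine setIntegral_mono_set (h.2.2.2.1 y (hx0.trans_le hxy)) ?_
      (HasSubset.Subset.eventuallyLE (Set.Ioc_subset_Ioc le_rfl hxy))
    filter_upwards [ae_restrict_mem measurableSet_Ioc] with t ht
    exact (h.1 t ht.1).le

end S15g

open S15 S15b S15c S15d S15e S15f S15g in
theorem stmt_15 (b : ℝ) (hb : 0 < b) :
    ∀ Ψ ∈ Yb b, ∃ Ψn : ℕ → (ℝ → ℝ),
      (∀ n, Ψn n ∈ AbS b) ∧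
      Filter.Tendsto (fun n => dY Ψ (Ψn n)) Filter.atTop (nhds 0) := by
  rintro Ψ ⟨⟨φ, hpair⟩, hΨb⟩
  set c : ℕ → ℝ := fun n => max 1 b + n with hcdef
  have hc1 : ∀ n, 1 ≤ c n := fun n => le_add_of_le_of_nonneg (le_max_left _ _) (Nat.cast_nonneg n)
  have hcb : ∀ n, b ≤ c n := fun n => le_add_of_le_of_nonneg (le_max_right _ _) (Nat.cast_nonneg n)
  have hc0 : ∀ n, (0:ℝ) < c n := fun n => lt_of_lt_of_le one_pos (hc1 n)
  have hPb : ∀ n, Phic φ (c n) b = b := fun n => by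
    rw [Phic_eq hpair (hc1 n) hb.le (hcb n)]; exact hΨb
  refine ⟨fun n => Phic φ (c n), fun n => ⟨⟨phic φ (c n), Phic_pair hpair (hc1 n),
    phic_div_integrable hpair (hc1 n)⟩, hPb n⟩, ?_⟩
  -- convergence
  set G : ℝ → ℝ := fun x => (x+b)^2/(x+1)^4 with hGdef
  have hGint : IntegrableOn G (Set.Ioi 0) := G_integrable hb
  set F : ℕ → ℝ → ℝ := fun n x => (Ψ x - Phic φ (c n) x)^2/(x+1)^4 with hFdef
  have hFnonneg : ∀ n x, 0 ≤ F n x := fun n x => by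
    simp only [hFdef]; positivity
  have hFle : ∀ n, ∀ x ∈ Set.Ioi (0:ℝ), F n x ≤ G x := by
    intro n x hx
    have hx0 : (0:ℝ) < x := hx
    have h1 : Ψ x ≤ x + b := S15f.growth hpair hb hΨb hx0.le
    have h2 : 0 ≤ Ψ x := S15f.nonneg hpair hx0.le
    have h3 : Phic φ (c n) x ≤ x + b :=
      S15f.growth (Phic_pair hpair (hc1 n)) hb (hPb n) hx0.le
    have h4 : 0 ≤ Phic φ (c n) x := S15f.nonneg (Phic_pair hpair (hc1 n)) hx0.le
    have hsq : (Ψ x - Phic φ (c n) x)^2 ≤ (x+b)^2 :=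
      sq_le_sq' (by linarith) (by linarith)
    simp only [hFdef, hGdef]
    gcongr
  have hFmeas : ∀ n, AEStronglyMeasurable (F n) (volume.restrict (Set.Ioi 0)) := by
    intro n
    have hm : Measurable (fun x => ((∫ t in Set.Ioc 0 x, φ t) - Phic φ (c n) x)^2/(x+1)^4) := by
      apply Measurable.div
      · exact (((prim_mono hpair).measurable).sub
          ((Phic_mono hpair (hc0 n)).measurable)).pow_const 2
      · exact (measurable_id.add_const 1).pow_const 4
    refine hm.aestronglyMeasurable.congr ?_
    filter_upwards [ae_restrict_mem measurableSet_Ioi] with x hx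
    have : Ψ x = ∫ t in Set.Ioc 0 x, φ t := hpair.2.2.2.2.1 x (show (0:ℝ) ≤ x from le_of_lt hx)
    simp only [hFdef, this]
  have hFint : ∀ n, IntegrableOn (F n) (Set.Ioi 0) := by
    intro n
    refine Integrable.mono' hGint (hFmeas n) ?_
    filter_upwards [ae_restrict_mem measurableSet_Ioi] with x hx
    rw [Real.norm_eq_abs, abs_of_nonneg (hFnonneg n x)]
    exact hFle n x hx
  have hFzero : ∀ n, ∀ x ∈ Set.Ioc (0:ℝ) (c n), F n x = 0 := by
    intro n x hx
    have : Phic φ (c n) x = Ψ x := Phic_eq hpair (hc1 n) hx.1.le hx.2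
    simp [hFdef, this]
  have hsplit : ∀ (f : ℝ → ℝ), IntegrableOn f (Set.Ioi 0) → ∀ n,
      ∫ x in Set.Ioi (0:ℝ), f x =
        (∫ x in Set.Ioc (0:ℝ) (c n), f x) + ∫ x in Set.Ioi (c n), f x := by
    intro f hf n
    rw [← setIntegral_union Set.Ioc_disjoint_Ioi_same measurableSet_Ioi
      (hf.mono_set (Set.Ioc_subset_Ioi_self))
      (hf.mono_set (Set.Ioi_subset_Ioi (hc0 n).le)),
      Set.Ioc_union_Ioi_eq_Ioi (hc0 n).le]
  have hIle : ∀ n, ∫ x in Set.Ioi (0:ℝ), F n x ≤ ∫ x in Set.Ioi (c n), G x := by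
    intro n
    rw [hsplit (F n) (hFint n) n]
    have h1 : ∫ x in Set.Ioc (0:ℝ) (c n), F n x = 0 := by
      rw [setIntegral_congr_fun measurableSet_Ioc (g := fun _ => (0:ℝ)) (hFzero n)]
      simp
    have h2 : ∫ x in Set.Ioi (c n), F n x ≤ ∫ x in Set.Ioi (c n), G x := by
      refine setIntegral_mono_on ((hFint n).mono_set (Set.Ioi_subset_Ioi (hc0 n).le))
        (hGint.mono_set (Set.Ioi_subset_Ioi (hc0 n).le)) measurableSet_Ioi ?_
      intro x hx
      exact hFle n x (lt_trans (hc0 n) hx)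
    linarith
  have hInonneg : ∀ n, 0 ≤ ∫ x in Set.Ioi (0:ℝ), F n x := fun n =>
    setIntegral_nonneg measurableSet_Ioi (fun x _ => hFnonneg n x)
  -- tail of G tends to 0
  have hUnion : (⋃ n, Set.Ioc (0:ℝ) (c n)) = Set.Ioi (0:ℝ) := by
    ext x
    simp only [Set.mem_iUnion, Set.mem_Ioc, Set.mem_Ioi]
    constructor
    · rintro ⟨n, hn⟩; exact hn.1
    · intro hx
      refine ⟨⌈x⌉₊, hx, ?_⟩
      calc x ≤ ⌈x⌉₊ := Nat.le_ceil x
        _ ≤ max 1 b + ⌈x⌉₊ := by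
            have : (0:ℝ) ≤ max 1 b := le_trans zero_le_one (le_max_left _ _)
            linarith
  have hmono : Monotone (fun n => Set.Ioc (0:ℝ) (c n)) := by
    intro m n hmn
    refine Set.Ioc_subset_Ioc le_rfl ?_
    simp only [hcdef]
    exact add_le_add_right (Nat.cast_le.2 hmn) _
  have h1 : Tendsto (fun n => ∫ x in Set.Ioc (0:ℝ) (c n), G x) atTop
      (nhds (∫ x in Set.Ioi (0:ℝ), G x)) := by
    have := tendsto_setIntegral_of_monotone (fun n => measurableSet_Ioc) hmono
      (hUnion ▸ hGint)
    rwa [hUnion] at this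
  have htail : Tendsto (fun n => ∫ x in Set.Ioi (c n), G x) atTop (nhds 0) := by
    have heq : ∀ n, ∫ x in Set.Ioi (c n), G x =
        (∫ x in Set.Ioi (0:ℝ), G x) - ∫ x in Set.Ioc (0:ℝ) (c n), G x := by
      intro n
      rw [hsplit G hGint n]; ring
    simp only [heq]
    have := tendsto_const_nhds (x := ∫ x in Set.Ioi (0:ℝ), G x) (f := atTop (α := ℕ)) |>.sub h1
    simpa using this
  have hI : Tendsto (fun n => ∫ x in Set.Ioi (0:ℝ), F n x) atTop (nhds 0) :=
    tendsto_of_tendsto_of_tendsto_of_le_of_le tendsto_const_nhds htail hInonneg hIle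
  have := (Real.continuous_sqrt.tendsto 0).comp hI
  rw [Real.sqrt_zero] at this
  exact this
end
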